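/- Let K₁ ≥ 1 be a real number and let Δt be a real number with 0 < Δt < (2 + K₁)⁻¹. Then for every nonnegative integer k, Γ(Δt⁻¹)/Γ(Δt⁻¹ − K₁) ≤ (Δt⁻¹)^{K₁}. -/

import Mathlib

/-- Estimate on `Γ(Δt⁻¹) / Γ(Δt⁻¹ - K₁)` used in the proof of Theorem 3.1. -/
theorem gamma_ratio_le_rpow_inv_step (K₁ Δt : ℝ) (hK₁ : 1 ≤ K₁)
    (hΔt0 : 0 < Δt) (hΔt : Δt < (2 + K₁)⁻¹) :
    ∀ _k : ℕ, Real.Gamma Δt⁻¹ / Real.Gamma (Δt⁻¹ - K₁) ≤ Δt⁻¹ ^ K₁ := by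
  intro _k
  set x := Δt⁻¹ with hx
  have h2K : (0:ℝ) < 2 + K₁ := by linarith
  have hxgt : 2 + K₁ < x := by
    rw [hx]
    have := (inv_strictAnti₀ hΔt0 hΔt)
    simpa using this
  have hx0 : 0 < x := by linarith
  have hs : 0 < x - K₁ := by linarith
  have ht : 0 < x + 1 := by linarith
  have hK0 : 0 < K₁ + 1 := by linarith
  set a : ℝ := (K₁ + 1)⁻¹ with ha
  set b : ℝ := K₁ / (K₁ + 1) with hb
  have ha0 : 0 < a := by positivity
  have hb0 : 0 < b := by positivity
  have hab : a + b = 1 := by rw [ha, hb]; field_simp; ring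
  have hcomb : a * (x - K₁) + b * (x + 1) = x := by
    rw [ha, hb]; field_simp; ring
  have key := Real.Gamma_mul_add_mul_le_rpow_Gamma_mul_rpow_Gamma hs ht ha0 hb0 hab
  rw [hcomb] at key
  have hG : 0 < Real.Gamma x := Real.Gamma_pos_of_pos hx0
  have hH : 0 < Real.Gamma (x - K₁) := Real.Gamma_pos_of_pos hs
  have hGadd : Real.Gamma (x + 1) = x * Real.Gamma x := Real.Gamma_add_one hx0.ne'
  rw [hGadd, Real.mul_rpow hx0.le hG.le] at key
  have hGb : 0 < Real.Gamma x ^ b := Real.rpow_pos_of_pos hG b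
  have key2 : Real.Gamma x ^ a ≤ Real.Gamma (x - K₁) ^ a * x ^ b := by
    have h1 : Real.Gamma x / Real.Gamma x ^ b ≤ Real.Gamma (x - K₁) ^ a * x ^ b := by
      rw [div_le_iff₀ hGb]
      calc Real.Gamma x ≤ Real.Gamma (x - K₁) ^ a * (x ^ b * Real.Gamma x ^ b) := key
        _ = Real.Gamma (x - K₁) ^ a * x ^ b * Real.Gamma x ^ b := by ring
    have h2 : Real.Gamma x / Real.Gamma x ^ b = Real.Gamma x ^ a := by
      rw [show a = 1 - b by linarith, Real.rpow_sub hG, Real.rpow_one]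
    rwa [h2] at h1
  have key3 : (Real.Gamma x ^ a) ^ (K₁ + 1) ≤ (Real.Gamma (x - K₁) ^ a * x ^ b) ^ (K₁ + 1) := by
    apply Real.rpow_le_rpow (Real.rpow_pos_of_pos hG a).le key2 hK0.le
  rw [Real.mul_rpow (Real.rpow_pos_of_pos hH a).le (Real.rpow_pos_of_pos hx0 b).le,
    ← Real.rpow_mul hG.le, ← Real.rpow_mul hH.le, ← Real.rpow_mul hx0.le] at key3
  have haK : a * (K₁ + 1) = 1 := by rw [ha]; field_simp
  have hbK : b * (K₁ + 1) = K₁ := by rw [hb]; field_simp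
  rw [haK, hbK, Real.rpow_one, Real.rpow_one] at key3
  rw [div_le_iff₀ hH]
  linarith [key3]
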